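/- arXiv:1604.00258 — 3 statements merged into one kernel-verified Lean document; each statement's English description precedes it below -/
import Mathlib

section
/- Let S : ℕ × {0,1} → O(X) be a dyadic subbase of a T0 topological space X (the image of S is a subbasis of the topology and S(n,0) ∩ S(n,1) = ∅ for all n). Then the induced map φ_S : X → T^ω, defined by φ_S(x)(n) = 0 if x ∈ S(n,0), 1 if x ∈ S(n,1), and ⊥ otherwise, is injective and continuous. -/
/-- Plotkin's T, modelled as `Option Bool` (`⊥ = none`), topology generated by `{{0},{1}}`. -/
def plotkinT : TopologicalSpace (Option Bool) :=
  TopologicalSpace.generateFrom {{some false}, {some true}}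

/-- `T^ω`: the countable product of Plotkin's T. -/
def Tomega : TopologicalSpace (ℕ → Option Bool) :=
  @Pi.topologicalSpace ℕ (fun _ => Option Bool) (fun _ => plotkinT)

/-- The map `φ_S : X → T^ω` induced by `S : ℕ × {0,1} → O(X)`:
`φ_S(x)(n) = 0` if `x ∈ S n 0`, `1` if `x ∈ S n 1`, `⊥` otherwise. -/
noncomputable def phi {X : Type*} (S : ℕ → Bool → Set X) (x : X) (n : ℕ) : Option Bool :=
  open Classical in
  if x ∈ S n false then some false else if x ∈ S n true then some true else none

lemma phi_false_iff {X : Type*} (S : ℕ → Bool → Set X) (x : X) (n : ℕ) :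
    phi S x n = some false ↔ x ∈ S n false := by
  unfold phi
  split_ifs with h1 h2 <;> simp_all

lemma phi_true_iff {X : Type*} (S : ℕ → Bool → Set X)
    (hdisj : ∀ n : ℕ, S n false ∩ S n true = ∅) (x : X) (n : ℕ) :
    phi S x n = some true ↔ x ∈ S n true := by
  unfold phi
  split_ifs with h1 h2
  · simp only [Option.some.injEq]
    constructor
    · intro h; exact absurd h (by simp)
    · intro h; exact absurd (Set.mem_inter h1 h) (by rw [hdisj n]; simp)
  · simp [h2]
  · simp [h2]

/-- If `S` is a dyadic subbase of a T0 space `X` (its image is a subbasis of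
the topology and `S n 0 ∩ S n 1 = ∅` for all `n`), then `φ_S : X → T^ω` is injective
and continuous. -/
theorem phi_injective_continuous {X : Type*} [tX : TopologicalSpace X] [T0Space X]
    (S : ℕ → Bool → Set X)
    (hsub : tX = TopologicalSpace.generateFrom {U : Set X | ∃ n i, U = S n i})
    (hdisj : ∀ n : ℕ, S n false ∩ S n true = ∅) :
    Function.Injective (phi S) ∧ @Continuous X (ℕ → Option Bool) tX Tomega (phi S) := by
  have hmem : ∀ x y : X, phi S x = phi S y → ∀ n i, x ∈ S n i ↔ y ∈ S n i := by
    intro x y h n i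
    cases i
    · rw [← phi_false_iff S x n, ← phi_false_iff S y n, h]
    · rw [← phi_true_iff S hdisj x n, ← phi_true_iff S hdisj y n, h]
  constructor
  · intro x y h
    apply Inseparable.eq
    rw [inseparable_iff_forall_isOpen]
    intro U hU
    rw [hsub] at hU
    induction hU with
    | basic V hV =>
      obtain ⟨n, i, rfl⟩ := hV
      exact hmem x y h n i
    | univ => simp
    | inter V W _ _ ihV ihW => simp [ihV, ihW]
    | sUnion s _ ih =>
      simp only [Set.mem_sUnion]
      exact ⟨fun ⟨t, ht, hxt⟩ => ⟨t, ht, (ih t ht).mp hxt⟩,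
             fun ⟨t, ht, hyt⟩ => ⟨t, ht, (ih t ht).mpr hyt⟩⟩
  · have key : ∀ n, @Continuous X (Option Bool) tX plotkinT (fun x => phi S x n) := by
      intro n
      rw [plotkinT, continuous_generateFrom_iff]
      intro s hs
      have hopen : ∀ i, IsOpen (S n i) := by
        intro i
        rw [hsub]
        exact TopologicalSpace.GenerateOpen.basic _ ⟨n, i, rfl⟩
      rcases hs with hs | hs
      · subst hs
        have : (fun x => phi S x n) ⁻¹' {some false} = S n false := by
          ext x; simp [phi_false_iff S x n]
        rw [this]; exact hopen false
      · simp only [Set.mem_singleton_iff] at hs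
        subst hs
        have : (fun x => phi S x n) ⁻¹' {some true} = S n true := by
          ext x; simp [phi_true_iff S hdisj x n]
        rw [this]; exact hopen true
    exact @continuous_pi _ _ _ tX (fun _ => plotkinT) _ key
end

section
/- Let S be a dyadic subbase of X and φ_S : X → T^ω the induced map. Then φ_S is a topological embedding (a homeomorphism onto its image). -/
lemma phi_mem_iff {X : Type*} (S : ℕ → Bool → Set X)
    (hdisj : ∀ n : ℕ, S n false ∩ S n true = ∅) (x : X) (n : ℕ) (b : Bool) :
    x ∈ S n b ↔ phi S x n = some b := by
  have hd : x ∈ S n false → x ∈ S n true → False := fun h1 h2 =>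
    Set.eq_empty_iff_forall_notMem.mp (hdisj n) x ⟨h1, h2⟩
  cases b <;> unfold phi <;> split_ifs with h1 h2 <;> simp_all

/-- If `S` is a dyadic subbase of `X` (so that `X` is T0), the induced map
`φ_S : X → T^ω` is a topological embedding. -/
theorem phi_embedding {X : Type*} [tX : TopologicalSpace X] [T0Space X]
    (S : ℕ → Bool → Set X)
    (hsub : tX = TopologicalSpace.generateFrom {U : Set X | ∃ n i, U = S n i})
    (hdisj : ∀ n : ℕ, S n false ∩ S n true = ∅) :
    @Topology.IsEmbedding X (ℕ → Option Bool) tX Tomega (phi S) := by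
  letI : TopologicalSpace (ℕ → Option Bool) := Tomega
  refine ⟨⟨?_⟩, ?_⟩
  · -- inducing
    have h1 : Tomega = ⨅ n : ℕ, TopologicalSpace.induced (fun f : ℕ → Option Bool => f n) plotkinT := rfl
    rw [h1, induced_iInf]
    have h2 : ∀ n : ℕ, TopologicalSpace.induced (phi S)
        (TopologicalSpace.induced (fun f : ℕ → Option Bool => f n) plotkinT)
        = TopologicalSpace.generateFrom {S n false, S n true} := by
      intro n
      rw [induced_compose]
      show TopologicalSpace.induced (fun x => phi S x n)
        (TopologicalSpace.generateFrom {{some false}, {some true}}) = _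
      rw [induced_generateFrom_eq]
      congr 1
      have hpre : ∀ b : Bool, (fun x => phi S x n) ⁻¹' {some b} = S n b := by
        intro b; ext x; simp [phi_mem_iff S hdisj x n b]
      rw [Set.image_insert_eq, Set.image_singleton, hpre false, hpre true]
    simp_rw [h2]
    rw [← generateFrom_iUnion, hsub]
    congr 1
    ext U
    simp only [Set.mem_iUnion, Set.mem_insert_iff, Set.mem_singleton_iff, Set.mem_setOf_eq]
    constructor
    · rintro ⟨n, i, rfl⟩; exact ⟨n, by cases i <;> simp⟩
    · rintro ⟨n, h | h⟩
      · exact ⟨n, false, h⟩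
      · exact ⟨n, true, h⟩
  · -- injective
    intro x y hxy
    have hmem : ∀ n b, x ∈ S n b ↔ y ∈ S n b := by
      intro n b
      rw [phi_mem_iff S hdisj, phi_mem_iff S hdisj, hxy]
    refine Inseparable.eq ?_
    rw [inseparable_iff_forall_isOpen]
    intro U hU
    rw [hsub] at hU
    induction hU with
    | basic V hV => obtain ⟨n, i, rfl⟩ := hV; exact hmem n i
    | univ => simp
    | inter V W _ _ ihV ihW => simp [ihV, ihW]
    | sUnion T _ ihT =>
      simp only [Set.mem_sUnion]
      exact ⟨fun ⟨t, ht, hx⟩ => ⟨t, ht, (ihT t ht).mp hx⟩,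
             fun ⟨t, ht, hy⟩ => ⟨t, ht, (ihT t ht).mpr hy⟩⟩
end

section
/- Let T be a pruned binary tree named by p ∈ T^ω under δ_PT as follows: p(0) = ⊥ iff T ≠ ∅, and for each w ∈ T with code n, p(n+1) = ⊥ iff both children w0, w1 ∈ T, p(n+1) = 0 iff only w0 ∈ T, p(n+1) = 1 iff only w1 ∈ T (and p(m) ∈ {0,1} arbitrary for codes of vertices not in T). If [T] is finite with cardinality k, then the number of positions n with p(n) = ⊥ equals k. -/
/-- The set of infinite paths through a set of finite binary strings. -/
def Paths (T : Set (List Bool)) : Set (ℕ → Bool) :=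
  {p | ∀ n : ℕ, (List.ofFn fun i : Fin n => p i) ∈ T}

namespace CardBotAux

open Classical in
/-- left-most child choice -/
noncomputable def nxt (T : Set (List Bool)) (v : List Bool) : List Bool :=
  if v ++ [false] ∈ T then v ++ [false] else v ++ [true]

noncomputable def chain (T : Set (List Bool)) (v : List Bool) (n : ℕ) : List Bool :=
  (nxt T)^[n] v

/-- left-most path through v -/
noncomputable def L (T : Set (List Bool)) (v : List Bool) (i : ℕ) : Bool :=
  (chain T v (i + 1)).getD i false

lemma getD_of_prefix {l l' : List Bool} (h : l <+: l') {i : ℕ} (hi : i < l.length) :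
    l'.getD i false = l.getD i false := by
  obtain ⟨t, rfl⟩ := h
  rw [List.getD_eq_getElem _ _ hi, List.getD_eq_getElem _ _ (by simp; omega),
    List.getElem_append_left]

variable {T : Set (List Bool)}

lemma prefix_nxt (v : List Bool) : v <+: nxt T v := by
  unfold nxt; split <;> exact ⟨_, rfl⟩

lemma length_nxt (v : List Bool) : (nxt T v).length = v.length + 1 := by
  unfold nxt; split <;> simp

lemma chain_zero (v : List Bool) : chain T v 0 = v := rfl

lemma chain_succ (v : List Bool) (n : ℕ) : chain T v (n + 1) = nxt T (chain T v n) :=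
  Function.iterate_succ_apply' _ _ _

lemma chain_succ' (v : List Bool) (n : ℕ) : chain T v (n + 1) = chain T (nxt T v) n :=
  Function.iterate_succ_apply _ _ _

lemma length_chain (v : List Bool) (n : ℕ) : (chain T v n).length = v.length + n := by
  induction n with
  | zero => rfl
  | succ n ih => rw [chain_succ, length_nxt, ih]; omega

lemma chain_prefix (v : List Bool) {n m : ℕ} (h : n ≤ m) : chain T v n <+: chain T v m := by
  induction m with
  | zero => simp_all
  | succ m ih =>
    rcases Nat.eq_or_lt_of_le h with rfl | h'
    · exact List.prefix_rfl
    · exact (ih (Nat.lt_succ_iff.mp h')).trans (by rw [chain_succ]; exact prefix_nxt _)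

lemma nxt_mem (hpruned : ∀ w ∈ T, w ++ [false] ∈ T ∨ w ++ [true] ∈ T)
    {v : List Bool} (hv : v ∈ T) : nxt T v ∈ T := by
  unfold nxt; split
  · assumption
  · rcases hpruned v hv with h | h
    · exact absurd h ‹_›
    · exact h

lemma chain_mem (hpruned : ∀ w ∈ T, w ++ [false] ∈ T ∨ w ++ [true] ∈ T)
    {v : List Bool} (hv : v ∈ T) (n : ℕ) : chain T v n ∈ T := by
  induction n with
  | zero => exact hv
  | succ n ih => rw [chain_succ]; exact nxt_mem hpruned ih

/-- prefixes of the leftmost path are `take`s of the chain. -/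
lemma ofFn_L (v : List Bool) (n : ℕ) :
    (List.ofFn fun i : Fin n => L T v i) = (chain T v n).take n := by
  apply List.ext_getElem
  · simp [length_chain]
  · intro i h1 h2
    simp only [List.getElem_ofFn, List.getElem_take]
    have hi : i < n := by simpa using h1
    have hlen : i < (chain T v (i + 1)).length := by rw [length_chain]; omega
    rw [show L T v i = (chain T v n).getD i false from
      (getD_of_prefix (chain_prefix v hi) hlen).symm]
    rw [List.getD_eq_getElem]

lemma L_mem_paths (htree : ∀ w v : List Bool, w <+: v → v ∈ T → w ∈ T)
    (hpruned : ∀ w ∈ T, w ++ [false] ∈ T ∨ w ++ [true] ∈ T)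
    {v : List Bool} (hv : v ∈ T) : L T v ∈ Paths T := by
  intro n
  rw [ofFn_L]
  exact htree _ _ (List.take_prefix _ _) (chain_mem hpruned hv n)

/-- leftmost path extends v -/
lemma ofFn_L_eq_self (v : List Bool) :
    (List.ofFn fun i : Fin v.length => L T v i) = v := by
  rw [ofFn_L]
  have h : v <+: chain T v v.length := chain_prefix v (Nat.zero_le _)
  obtain ⟨t, ht⟩ := h
  rw [← ht, List.take_left]

/-- for `i ≥ v.length`, the prefix of length `i` is exactly a chain element -/
lemma ofFn_L_eq_chain (v : List Bool) {i : ℕ} (hi : v.length ≤ i) :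
    (List.ofFn fun j : Fin i => L T v j) = chain T v (i - v.length) := by
  rw [ofFn_L]
  have h : chain T v (i - v.length) <+: chain T v i := chain_prefix v (by omega)
  obtain ⟨t, ht⟩ := h
  have hl : (chain T v (i - v.length)).length = i := by rw [length_chain]; omega
  have h2 := List.prefix_iff_eq_take.mp ⟨t, ht⟩
  rw [hl] at h2
  rw [← h2]

/-- the leftmost property -/
lemma L_leftmost (v : List Bool) {i : ℕ} (hi : v.length ≤ i)
    (h : (List.ofFn fun j : Fin i => L T v j) ++ [false] ∈ T) : L T v i = false := by
  rw [ofFn_L_eq_chain v hi] at h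
  set j := i - v.length with hj
  have hstep : chain T v (j + 1) = chain T v j ++ [false] := by
    rw [chain_succ]; unfold nxt; rw [if_pos h]
  have hlen : (chain T v j).length = i := by rw [length_chain]; omega
  have hlt : i < (chain T v (j + 1)).length := by rw [length_chain]; omega
  have h3 : L T v i = (chain T v (j + 1)).getD i false :=
    getD_of_prefix (chain_prefix v (by omega)) hlt
  rw [h3, hstep]
  have h4 : ∀ l : List Bool, l.length = i → (l ++ [false]).getD i false = false := by
    rintro l rfl
    rw [List.getD_eq_getElem _ _ (by simp), List.getElem_concat_length] <;> rfl
  exact h4 _ hlen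

lemma L_nxt (v : List Bool) : L T v = L T (nxt T v) := by
  funext i
  have h : chain T v (i + 1) <+: chain T v (i + 2) := chain_prefix v (by omega)
  have hlt : i < (chain T v (i + 1)).length := by rw [length_chain]; omega
  rw [L, L, ← chain_succ', getD_of_prefix h hlt]

/-- bit of finite prefix -/
lemma getD_ofFn (f : ℕ → Bool) {n j : ℕ} (h : j < n) :
    (List.ofFn fun i : Fin n => f i).getD j false = f j := by
  rw [List.getD_eq_getElem] <;> simp [h]

lemma L_bit (v : List Bool) {j : ℕ} (h : j < v.length) : L T v j = v.getD j false :=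
  getD_of_prefix (show v <+: chain T v (j + 1) from chain_prefix v (Nat.zero_le _)) h

end CardBotAux

namespace CardBotAux

variable {T : Set (List Bool)}

lemma getD_concat (l : List Bool) (a : Bool) : (l ++ [a]).getD l.length false = a := by
  rw [List.getD_eq_getElem _ _ (by simp), List.getElem_concat_length]
  rfl

lemma ofFn_succ_concat (x : ℕ → Bool) (n : ℕ) :
    (List.ofFn fun i : Fin (n + 1) => x i)
      = (List.ofFn fun i : Fin n => x i) ++ [x n] := by
  rw [List.ofFn_succ']
  simp [List.concat_eq_append]

lemma lists_eq_of_getD {w w' : List Bool} (hl : w.length = w'.length)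
    (h : ∀ i < w.length, w.getD i false = w'.getD i false) : w = w' := by
  apply List.ext_getElem hl
  intro i h1 h2
  rw [← List.getD_eq_getElem _ false h1, ← List.getD_eq_getElem _ false h2, h i h1]

/-- separation: a path in a finite path set is determined by a long enough prefix -/
lemma sep (hfin : (Paths T).Finite) {x : ℕ → Bool} (_ : x ∈ Paths T) :
    ∃ m, ∀ y ∈ Paths T, (∀ i < m, y i = x i) → y = x := by
  classical
  have hD : ((Paths T) \ {x}).Finite := hfin.diff
  set f : (ℕ → Bool) → ℕ :=
    fun y => if h : y ≠ x then Nat.find (Function.ne_iff.mp h) else 0 with hf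
  refine ⟨hD.toFinset.sup f + 1, fun y hy hagree => ?_⟩
  by_contra hne
  have hyD : y ∈ hD.toFinset := by
    rw [Set.Finite.mem_toFinset]; exact ⟨hy, hne⟩
  have hle : f y ≤ hD.toFinset.sup f := Finset.le_sup hyD
  have hns : y (f y) ≠ x (f y) := by
    rw [hf]; simp only [dif_pos hne]
    exact Nat.find_spec (Function.ne_iff.mp hne)
  exact hns (hagree _ (by omega))

/-- every path in a finite path set is eventually the leftmost path -/
lemma eventually_L (htree : ∀ w v : List Bool, w <+: v → v ∈ T → w ∈ T)
    (hpruned : ∀ w ∈ T, w ++ [false] ∈ T ∨ w ++ [true] ∈ T)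
    (hfin : (Paths T).Finite) {x : ℕ → Bool} (hx : x ∈ Paths T) :
    ∃ m, x = L T (List.ofFn fun i : Fin m => x i) := by
  obtain ⟨m, hm⟩ := sep hfin hx
  refine ⟨m, ?_⟩
  set w := (List.ofFn fun i : Fin m => x i) with hw
  have key : ∀ j, (List.ofFn fun i : Fin (m + j) => x i) = chain T w j := by
    intro j
    induction j with
    | zero => rfl
    | succ j ih =>
      rw [chain_succ, ← ih,
        show (List.ofFn fun i : Fin (m + (j + 1)) => x i)
          = (List.ofFn fun i : Fin ((m + j) + 1) => x i) from rfl,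
        ofFn_succ_concat]
      set s := (List.ofFn fun i : Fin (m + j) => x i) with hs
      have hsT : s ∈ T := hx _
      have hnext : s ++ [x (m + j)] ∈ T := by
        rw [← ofFn_succ_concat]; exact hx _
      cases hxb : x (m + j) with
      | false =>
        rw [hxb] at hnext
        rw [nxt, if_pos hnext]
      | true =>
        by_cases hfa : s ++ [false] ∈ T
        · exfalso
          have hy := L_mem_paths htree hpruned hfa
          have hagree : ∀ i < m, L T (s ++ [false]) i = x i := by
            intro i him
            have hil : i < s.length := by rw [hs]; simp; omega
            rw [L_bit _ (by simp at hil ⊢; omega),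
              getD_of_prefix (⟨[false], rfl⟩ : s <+: s ++ [false]) hil, hs,
              getD_ofFn _ (by omega)]
          have heq := hm _ hy hagree
          have hslen : s.length = m + j := by rw [hs]; simp
          have hb : L T (s ++ [false]) (m + j) = false := by
            rw [L_bit _ (by simp [hslen]), ← hslen, getD_concat]
          rw [heq, hxb] at hb
          exact Bool.true_eq_false.mp hb
        · rw [nxt, if_neg hfa]
  funext i
  have h1 := key (i + 1)
  rw [L, ← h1, getD_ofFn _ (by omega)]

/-- the clash lemma used for injectivity -/
lemma clash (htree : ∀ w v : List Bool, w <+: v → v ∈ T → w ∈ T)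
    {u w : List Bool} (hu : u ∈ T) (hwf : w ++ [false] ∈ T)
    (hlen : u.length ≤ w.length) (h : L T u = L T (w ++ [true])) : False := by
  have hpre : ∀ i < w.length, L T u i = w.getD i false := by
    intro i hi
    rw [h, L_bit _ (by simp; omega),
      getD_of_prefix (⟨[true], rfl⟩ : w <+: w ++ [true]) hi]
  have hofn : (List.ofFn fun j : Fin w.length => L T u j) = w := by
    apply List.ext_getElem (by simp)
    intro i h1 h2
    have hi : i < w.length := by simpa using h1
    simp only [List.getElem_ofFn]
    rw [hpre i hi, List.getD_eq_getElem _ false h2]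
  have hfalse : L T u w.length = false := L_leftmost u hlen (by rw [hofn]; exact hwf)
  have htrue : L T u w.length = true := by
    rw [h, L_bit _ (by simp), getD_concat]
  rw [hfalse] at htrue
  exact Bool.false_eq_true.mp htrue

end CardBotAux

open CardBotAux

/-- Let `T` be a pruned binary tree and `p ∈ T^ω` its canonical `δ_PT`-name
(with `ν : ℕ → {0,1}*` a bijection): `p 0 = ⊥ ↔ T ≠ ∅`; for `w = ν n ∈ T`,
`p (n+1) = ⊥` iff both children of `w` are in `T`, `p (n+1) = 0` iff only `w0 ∈ T`,
`p (n+1) = 1` iff only `w1 ∈ T`; and `p (m+1) ∈ {0,1}` for codes `m` of vertices not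
in `T`. If `[T]` is finite of cardinality `k`, then `p` has exactly `k` positions
equal to `⊥`. -/
theorem card_bot_eq_card_paths (ν : ℕ → List Bool) (hν : Function.Bijective ν)
    (T : Set (List Bool))
    (htree : ∀ w v : List Bool, w <+: v → v ∈ T → w ∈ T)
    (hpruned : ∀ w ∈ T, w ++ [false] ∈ T ∨ w ++ [true] ∈ T)
    (p : ℕ → Option Bool)
    (h0 : p 0 = none ↔ T.Nonempty)
    (hbot : ∀ n : ℕ, ν n ∈ T →
      (p (n + 1) = none ↔ (ν n ++ [false] ∈ T ∧ ν n ++ [true] ∈ T)))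
    (hzero : ∀ n : ℕ, ν n ∈ T →
      (p (n + 1) = some false ↔ (ν n ++ [false] ∈ T ∧ ν n ++ [true] ∉ T)))
    (hone : ∀ n : ℕ, ν n ∈ T →
      (p (n + 1) = some true ↔ (ν n ++ [true] ∈ T ∧ ν n ++ [false] ∉ T)))
    (hout : ∀ n : ℕ, ν n ∉ T → p (n + 1) ≠ none)
    (k : ℕ) (hfin : (Paths T).Finite) (hk : (Paths T).ncard = k) :
    {n : ℕ | p n = none}.Finite ∧ {n : ℕ | p n = none}.ncard = k := by
  classical
  set S := {n : ℕ | p n = none} with hS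
  -- characterize membership in S
  have hS0 : 0 ∈ S ↔ T.Nonempty := h0
  have hSsucc : ∀ n : ℕ, (n + 1) ∈ S ↔
      (ν n ∈ T ∧ ν n ++ [false] ∈ T ∧ ν n ++ [true] ∈ T) := by
    intro n
    constructor
    · intro hmem
      by_cases hn : ν n ∈ T
      · exact ⟨hn, (hbot n hn).mp hmem⟩
      · exact absurd hmem (hout n hn)
    · rintro ⟨hn, hc⟩
      exact (hbot n hn).mpr hc
  -- the map
  set g : ℕ → (ℕ → Bool) := fun n => Nat.rec (L T []) (fun n _ => L T (ν n ++ [true])) n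
    with hg
  have hg0 : g 0 = L T [] := rfl
  have hgs : ∀ n, g (n + 1) = L T (ν n ++ [true]) := fun n => rfl
  have hbij : Set.BijOn g S (Paths T) := by
    refine ⟨?_, ?_, ?_⟩
    · -- MapsTo
      rintro (_ | n) hn
      · rw [hg0]
        obtain ⟨w, hw⟩ := hS0.mp hn
        exact L_mem_paths htree hpruned (htree [] w List.nil_prefix hw)
      · rw [hgs]
        exact L_mem_paths htree hpruned ((hSsucc n).mp hn).2.2
    · -- InjOn
      have haux : ∀ a b : ℕ, a ∈ S → b ∈ S → g a = g b → a ≤ b → a = b := by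
        rintro (_ | n) (_ | m) ha hb heq hle
        · rfl
        · -- 0 vs m+1
          exfalso
          rw [hg0, hgs] at heq
          obtain ⟨hm, hmf, _⟩ := (hSsucc m).mp hb
          exact clash htree (htree [] _ List.nil_prefix hm) hmf (by simp) heq
        · omega
        · -- n+1 vs m+1
          obtain ⟨hn, hnf, hnt⟩ := (hSsucc n).mp ha
          obtain ⟨hm, hmf, hmt⟩ := (hSsucc m).mp hb
          rw [hgs, hgs] at heq
          rcases lt_trichotomy (ν n).length (ν m).length with hlt | hl | hlt
          · exfalso
            exact clash htree hnt hmf (by simp; omega) heq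
          · -- equal lengths: the strings are equal
            have : ν n = ν m := by
              apply lists_eq_of_getD hl
              intro i hi
              have h1 : L T (ν n ++ [true]) i = (ν n).getD i false :=
                (L_bit _ (by simp; omega)).trans
                  (getD_of_prefix (⟨[true], rfl⟩ : ν n <+: _) hi)
              have h2 : L T (ν m ++ [true]) i = (ν m).getD i false :=
                (L_bit _ (by simp; omega)).trans
                  (getD_of_prefix (⟨[true], rfl⟩ : ν m <+: _) (by omega))
              rw [← h1, ← h2, heq]
            rw [hν.injective this]
          · exfalso
            exact clash htree hmt hnf (by simp; omega) heq.symm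
      intro a ha b hb heq
      rcases le_total a b with h | h
      · exact haux a b ha hb heq h
      · exact (haux b a hb ha heq.symm h).symm
    · -- SurjOn
      intro x hx
      have hnil : [] ∈ T := by
        have h := hx 0
        simpa using htree [] _ List.nil_prefix h
      obtain ⟨m0, hm0⟩ := eventually_L htree hpruned hfin hx
      have hP : ∃ m, x = L T (List.ofFn fun i : Fin m => x i) := ⟨m0, hm0⟩
      rcases hmm : Nat.find hP with _ | s
      · -- minimal is 0 : x = L T []
        have hx0 : x = L T (List.ofFn fun i : Fin 0 => x i) := hmm ▸ Nat.find_spec hP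
        refine ⟨0, hS0.mpr ⟨[], hnil⟩, ?_⟩
        rw [hg0]
        simpa using hx0.symm
      · have hxs : x = L T (List.ofFn fun i : Fin (s + 1) => x i) :=
          hmm ▸ Nat.find_spec hP
        have hmin : ¬ x = L T (List.ofFn fun i : Fin s => x i) :=
          Nat.find_min hP (by omega)
        set w := (List.ofFn fun i : Fin s => x i) with hw
        have hwT : w ∈ T := hx s
        have hsplit : (List.ofFn fun i : Fin (s + 1) => x i) = w ++ [x s] :=
          ofFn_succ_concat x s
        have hnxt : nxt T w ≠ w ++ [x s] := by
          intro hcon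
          apply hmin
          rw [L_nxt (T := T) w, hcon, ← hsplit, ← hxs]
        have hxtrue : x s = true := by
          by_contra hc
          have hxf : x s = false := by simpa using hc
          have : w ++ [false] ∈ T := by
            rw [← hxf, ← hsplit]; exact hx _
          exact hnxt (by rw [nxt, if_pos this, hxf])
        have hwf : w ++ [false] ∈ T := by
          by_contra hf
          exact hnxt (by rw [nxt, if_neg hf, hxtrue])
        have hwt : w ++ [true] ∈ T := by
          rw [hxtrue] at hsplit
          rw [← hsplit]; exact hx _
        obtain ⟨n, hn⟩ := hν.surjective w
        refine ⟨n + 1, (hSsucc n).mpr ⟨hn ▸ hwT, hn ▸ hwf, hn ▸ hwt⟩, ?_⟩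
        rw [hgs, hn]
        rw [hxtrue] at hsplit
        rw [← hsplit, ← hxs]
  -- conclude
  have hSfin : S.Finite := by
    have himg : (g '' S).Finite := hbij.image_eq ▸ hfin
    exact Set.Finite.of_finite_image himg hbij.injOn
  refine ⟨hSfin, ?_⟩
  have h1 : (g '' S).ncard = S.ncard := Set.ncard_image_of_injOn hbij.injOn
  rw [← h1, hbij.image_eq, hk]
end
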